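/- Let F : [0, ℓ] → ℝ be continuous with F(0) = 0, F > 0 on (0, ℓ], F differentiable at 0 with F'(0) > 0; let ε > 0 be fixed, k(y) = exp(−(2/ε²)∫₀^y F), p(x) = (∫₀ˣ k)/(∫₀^ℓ k), L(x) = ∫ₓ^ℓ ∫₀ˣ k(z)k(u)(∫_u^z p/k) du dz, and E(x) = (2/ε²) L(x)/∫₀ˣ k. Then lim_{x→0⁺} (Ψ(ε) − E(x))/x² = 1/(3ε²), where Ψ(ε) = (2/ε²) ∫₀^ℓ k(u) (∫₀^u p(y)/k(y) dy) du. -/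

import Mathlib

open Real Filter Topology Set intervalIntegral

lemma aux13_int {ℓ : ℝ} (hℓ : 0 < ℓ) {f : ℝ → ℝ} (hf : ContinuousOn f (Set.Icc 0 ℓ))
    {a b : ℝ} (ha : a ∈ Set.Icc 0 ℓ) (hb : b ∈ Set.Icc 0 ℓ) :
    IntervalIntegrable f MeasureTheory.volume a b := by
  apply (hf.mono ?_).intervalIntegrable
  rw [show Set.Icc (0:ℝ) ℓ = Set.uIcc 0 ℓ from (Set.uIcc_of_le hℓ.le).symm] at ha hb ⊢
  exact Set.uIcc_subset_uIcc ha hb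

lemma aux13_deriv {ℓ : ℝ} (hℓ : 0 < ℓ) {f : ℝ → ℝ} (hf : ContinuousOn f (Set.Icc 0 ℓ))
    {x : ℝ} (hx : x ∈ Set.Ioo 0 ℓ) :
    HasDerivAt (fun u => ∫ t in (0:ℝ)..u, f t) (f x) x :=
  intervalIntegral.integral_hasDerivAt_right
    (aux13_int hℓ hf (Set.left_mem_Icc.2 hℓ.le) (Set.mem_Icc_of_Ioo hx))
    ((hf.mono Set.Ioo_subset_Icc_self).stronglyMeasurableAtFilter isOpen_Ioo x hx)
    (hf.continuousAt (Icc_mem_nhds hx.1 hx.2))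

lemma aux13_cont {ℓ : ℝ} (hℓ : 0 < ℓ) {f : ℝ → ℝ} (hf : ContinuousOn f (Set.Icc 0 ℓ)) :
    ContinuousOn (fun u => ∫ t in (0:ℝ)..u, f t) (Set.Icc 0 ℓ) := by
  have h := intervalIntegral.continuousOn_primitive_interval (a := (0:ℝ)) (b := ℓ)
    (μ := MeasureTheory.volume) (f := f) (by rw [Set.uIcc_of_le hℓ.le]; exact hf.integrableOn_Icc)
  rwa [Set.uIcc_of_le hℓ.le] at h

lemma aux13_tendsto {ℓ : ℝ} (hℓ : 0 < ℓ) {f : ℝ → ℝ} (hf : ContinuousOn f (Set.Icc 0 ℓ)) :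
    Tendsto f (𝓝[>] (0:ℝ)) (𝓝 (f 0)) := by
  have h : ContinuousWithinAt f (Set.Ioo 0 ℓ) 0 :=
    (hf 0 (Set.left_mem_Icc.2 hℓ.le)).mono Set.Ioo_subset_Icc_self
  rwa [ContinuousWithinAt, nhdsWithin_Ioo_eq_nhdsGT hℓ] at h

theorem stmt13 (ℓ : ℝ) (hℓ : 0 < ℓ) (F : ℝ → ℝ) (hF : ContinuousOn F (Set.Icc 0 ℓ))
    (hF0 : F 0 = 0) (hFpos : ∀ x ∈ Set.Ioc 0 ℓ, 0 < F x)
    (hFdiff : DifferentiableAt ℝ F 0) (hF' : 0 < deriv F 0)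
    (ε : ℝ) (hε : 0 < ε) (k p L E : ℝ → ℝ) (Ψ : ℝ)
    (hk : ∀ y, k y = Real.exp (-(2 / ε ^ 2) * ∫ t in (0:ℝ)..y, F t))
    (hp : ∀ x, p x = (∫ y in (0:ℝ)..x, k y) / (∫ y in (0:ℝ)..ℓ, k y))
    (hL : ∀ x, L x = ∫ z in x..ℓ, ∫ u in (0:ℝ)..x, k z * k u * ∫ y in u..z, p y / k y)
    (hE : ∀ x, E x = 2 / ε ^ 2 * (L x / ∫ y in (0:ℝ)..x, k y))
    (hΨ : Ψ = 2 / ε ^ 2 * ∫ u in (0:ℝ)..ℓ, k u * ∫ y in (0:ℝ)..u, p y / k y) :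
    Tendsto (fun x => (Ψ - E x) / x ^ 2) (𝓝[>] 0) (𝓝 (1 / (3 * ε ^ 2))) := by
  have hε2 : (0:ℝ) < ε ^ 2 := by positivity
  have m0 : (0:ℝ) ∈ Set.Icc (0:ℝ) ℓ := Set.left_mem_Icc.2 hℓ.le
  have mℓ : ℓ ∈ Set.Icc (0:ℝ) ℓ := Set.right_mem_Icc.2 hℓ.le
  -- continuity and positivity of k
  have hkpos : ∀ y, 0 < k y := fun y => by rw [hk y]; exact Real.exp_pos _
  have hkcont : ContinuousOn k (Set.Icc 0 ℓ) := by
    have h2 : ContinuousOn (fun y => Real.exp (-(2 / ε ^ 2) * ∫ t in (0:ℝ)..y, F t))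
        (Set.Icc 0 ℓ) :=
      Real.continuous_exp.comp_continuousOn (continuousOn_const.mul (aux13_cont hℓ hF))
    exact h2.congr fun y _ => hk y
  -- the primitives K, G, H
  obtain ⟨K, hKa⟩ : ∃ K : ℝ → ℝ, ∀ a, K a = ∫ y in (0:ℝ)..a, k y := ⟨_, fun _ => rfl⟩
  have hKfun : K = fun a => ∫ y in (0:ℝ)..a, k y := funext hKa
  have hKcont : ContinuousOn K (Set.Icc 0 ℓ) := hKfun ▸ aux13_cont hℓ hkcont
  have hKderiv : ∀ x ∈ Set.Ioo (0:ℝ) ℓ, HasDerivAt K (k x) x := fun x hx =>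
    hKfun ▸ aux13_deriv hℓ hkcont hx
  have hK0 : K 0 = 0 := by rw [hKa 0, intervalIntegral.integral_same]
  have hKℓ : 0 < K ℓ := by
    rw [hKa ℓ]
    exact intervalIntegral.intervalIntegral_pos_of_pos_on (aux13_int hℓ hkcont m0 mℓ)
      (fun y _ => hkpos y) hℓ
  have hKpos : ∀ x ∈ Set.Ioc (0:ℝ) ℓ, 0 < K x := fun x hx => by
    rw [hKa x]
    exact intervalIntegral.intervalIntegral_pos_of_pos_on
      (aux13_int hℓ hkcont m0 ⟨hx.1.le, hx.2⟩) (fun y _ => hkpos y) hx.1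
  have hpk : ∀ y, p y / k y = K y / (K ℓ * k y) := fun y => by
    rw [hp y, ← hKa y, ← hKa ℓ, div_div]
  have hpkcont : ContinuousOn (fun y => p y / k y) (Set.Icc 0 ℓ) := by
    have : ContinuousOn (fun y => K y / (K ℓ * k y)) (Set.Icc 0 ℓ) :=
      hKcont.div (continuousOn_const.mul hkcont)
        (fun y _ => (mul_pos hKℓ (hkpos y)).ne')
    exact this.congr fun y _ => hpk y
  obtain ⟨G, hGa⟩ : ∃ G : ℝ → ℝ, ∀ a, G a = ∫ y in (0:ℝ)..a, p y / k y := ⟨_, fun _ => rfl⟩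
  have hGfun : G = fun a => ∫ y in (0:ℝ)..a, p y / k y := funext hGa
  have hGcont : ContinuousOn G (Set.Icc 0 ℓ) := hGfun ▸ aux13_cont hℓ hpkcont
  have hGderiv : ∀ x ∈ Set.Ioo (0:ℝ) ℓ, HasDerivAt G (p x / k x) x := fun x hx =>
    hGfun ▸ aux13_deriv hℓ hpkcont hx
  have hG0 : G 0 = 0 := by rw [hGa 0, intervalIntegral.integral_same]
  have hkGcont : ContinuousOn (fun u => k u * G u) (Set.Icc 0 ℓ) := hkcont.mul hGcont
  obtain ⟨H, hHa⟩ : ∃ H : ℝ → ℝ, ∀ a, H a = ∫ u in (0:ℝ)..a, k u * G u := ⟨_, fun _ => rfl⟩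
  have hHfun : H = fun a => ∫ u in (0:ℝ)..a, k u * G u := funext hHa
  have hHderiv : ∀ x ∈ Set.Ioo (0:ℝ) ℓ, HasDerivAt H (k x * G x) x := fun x hx =>
    hHfun ▸ aux13_deriv hℓ hkGcont hx
  have hHcont : ContinuousOn H (Set.Icc 0 ℓ) := hHfun ▸ aux13_cont hℓ hkGcont
  have hH0 : H 0 = 0 := by rw [hHa 0, intervalIntegral.integral_same]
  -- key algebraic identity
  have key : ∀ x ∈ Set.Ioo (0:ℝ) ℓ, Ψ - E x = 2 / ε ^ 2 * K ℓ * (H x / K x) := by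
    intro x hx
    have mx : x ∈ Set.Icc (0:ℝ) ℓ := Set.mem_Icc_of_Ioo hx
    have hKx : K x ≠ 0 := (hKpos x ⟨hx.1, hx.2.le⟩).ne'
    have ik0x : IntervalIntegrable k MeasureTheory.volume 0 x := aux13_int hℓ hkcont m0 mx
    have ikxℓ : IntervalIntegrable k MeasureTheory.volume x ℓ := aux13_int hℓ hkcont mx mℓ
    have ikG0x : IntervalIntegrable (fun u => k u * G u) MeasureTheory.volume 0 x :=
      aux13_int hℓ hkGcont m0 mx
    have ikGxℓ : IntervalIntegrable (fun u => k u * G u) MeasureTheory.volume x ℓ :=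
      aux13_int hℓ hkGcont mx mℓ
    have hinner : ∀ z ∈ Set.uIcc x ℓ,
        (∫ u in (0:ℝ)..x, k z * k u * ∫ y in u..z, p y / k y)
          = K x * (k z * G z) - H x * k z := by
      intro z hz
      rw [Set.uIcc_of_le hx.2.le] at hz
      have hz' : z ∈ Set.Icc (0:ℝ) ℓ := ⟨hx.1.le.trans hz.1, hz.2⟩
      have e1 : Set.EqOn (fun u => k z * k u * ∫ y in u..z, p y / k y)
          (fun u => (k z * G z) * k u - k z * (k u * G u)) (Set.uIcc 0 x) := by
        intro u hu
        rw [Set.uIcc_of_le hx.1.le] at hu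
        have hu' : u ∈ Set.Icc (0:ℝ) ℓ := ⟨hu.1, hu.2.trans hx.2.le⟩
        have e2 : (∫ y in u..z, p y / k y) = G z - G u := by
          rw [hGa z, hGa u]
          exact (intervalIntegral.integral_interval_sub_left
            (aux13_int hℓ hpkcont m0 hz') (aux13_int hℓ hpkcont m0 hu')).symm
        simp only [e2]; ring
      rw [intervalIntegral.integral_congr e1,
        intervalIntegral.integral_sub (ik0x.const_mul _) (ikG0x.const_mul _),
        intervalIntegral.integral_const_mul, intervalIntegral.integral_const_mul,
        ← hKa x, ← hHa x]
      ring
    have hLx : L x = K x * (∫ z in x..ℓ, k z * G z) - H x * (∫ z in x..ℓ, k z) := by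
      rw [hL x, intervalIntegral.integral_congr
          (g := fun z => K x * (k z * G z) - H x * k z) hinner,
        intervalIntegral.integral_sub (ikGxℓ.const_mul _) (ikxℓ.const_mul _),
        intervalIntegral.integral_const_mul, intervalIntegral.integral_const_mul]
    have hsum1 : K x + (∫ z in x..ℓ, k z) = K ℓ := by
      rw [hKa x, hKa ℓ]; exact intervalIntegral.integral_add_adjacent_intervals ik0x ikxℓ
    have hΨ' : Ψ = 2 / ε ^ 2 * (H x + ∫ z in x..ℓ, k z * G z) := by
      rw [hΨ]
      congr 1
      have e3 : (∫ u in (0:ℝ)..ℓ, k u * ∫ y in (0:ℝ)..u, p y / k y)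
          = ∫ u in (0:ℝ)..ℓ, k u * G u := by simp only [← hGa]
      rw [e3, hHa x]
      exact (intervalIntegral.integral_add_adjacent_intervals ikG0x ikGxℓ).symm
    have hEx : E x = 2 / ε ^ 2 *
        ((K x * (∫ z in x..ℓ, k z * G z) - H x * (∫ z in x..ℓ, k z)) / K x) := by
      rw [hE x, hLx, ← hKa x]
    rw [hΨ', hEx, ← hsum1]
    field_simp
    ring
  -- limits
  have tk : Tendsto k (𝓝[>] (0:ℝ)) (𝓝 1) := by
    have := aux13_tendsto hℓ hkcont
    rwa [show k 0 = 1 by rw [hk 0]; simp] at this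
  have tK : Tendsto (fun x => K x / x) (𝓝[>] (0:ℝ)) (𝓝 1) := by
    apply HasDerivAt.lhopital_zero_right_on_Ioo hℓ hKderiv
      (g := fun x => x) (f' := k) (g' := fun _ => (1:ℝ)) (fun x _ => hasDerivAt_id x) (fun _ _ => one_ne_zero)
    · have := aux13_tendsto hℓ hKcont; rwa [hK0] at this
    · exact tendsto_nhdsWithin_of_tendsto_nhds (Continuous.tendsto' continuous_id 0 0 rfl)
    · simpa using tk
  have tG : Tendsto (fun x => G x / x ^ 2) (𝓝[>] (0:ℝ)) (𝓝 (1 / (2 * K ℓ))) := by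
    apply HasDerivAt.lhopital_zero_right_on_Ioo hℓ hGderiv
      (g := fun x => x ^ 2) (g' := fun x => 2 * x) (fun x _ => by simpa using (hasDerivAt_pow 2 x))
      (fun x hx => (mul_pos two_pos hx.1).ne')
    · have := aux13_tendsto hℓ hGcont; rwa [hG0] at this
    · exact tendsto_nhdsWithin_of_tendsto_nhds
        ((continuous_pow 2).tendsto' 0 0 (by norm_num))
    · have heq : ∀ᶠ x in 𝓝[>] (0:ℝ), K x / x * (1 / (2 * K ℓ * k x))
          = p x / k x / (2 * x) := by
        filter_upwards [self_mem_nhdsWithin] with x hx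
        have hx0 : x ≠ 0 := ne_of_gt hx
        rw [hpk x]
        field_simp
      refine Tendsto.congr' heq ?_
      have t2 : Tendsto (fun x => 1 / (2 * K ℓ * k x)) (𝓝[>] (0:ℝ))
          (𝓝 (1 / (2 * K ℓ * 1))) :=
        tendsto_const_nhds.div ((tendsto_const_nhds.mul tk)) (by simp [hKℓ.ne'])
      have := tK.mul t2
      rw [one_mul, mul_one] at this
      exact this
  have tH : Tendsto (fun x => H x / x ^ 3) (𝓝[>] (0:ℝ)) (𝓝 (1 / (6 * K ℓ))) := by
    apply HasDerivAt.lhopital_zero_right_on_Ioo hℓ hHderiv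
      (g := fun x => x ^ 3) (g' := fun x => 3 * x ^ 2) (fun x _ => by simpa using (hasDerivAt_pow 3 x))
      (fun x hx => (mul_pos three_pos (pow_pos hx.1 2)).ne')
    · have := aux13_tendsto hℓ hHcont; rwa [hH0] at this
    · exact tendsto_nhdsWithin_of_tendsto_nhds
        ((continuous_pow 3).tendsto' 0 0 (by norm_num))
    · have heq : ∀ᶠ x in 𝓝[>] (0:ℝ), k x * (G x / x ^ 2) / 3
          = k x * G x / (3 * x ^ 2) := by
        filter_upwards [self_mem_nhdsWithin] with x hx
        ring
      refine Tendsto.congr' heq ?_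
      have := (tk.mul tG).div_const 3
      rw [one_mul] at this
      convert this using 2
      field_simp
      ring
  have tx : Tendsto (fun x => x / K x) (𝓝[>] (0:ℝ)) (𝓝 1) := by
    have := tK.inv₀ one_ne_zero
    simp only [inv_div] at this
    simpa using this
  have tmain : Tendsto (fun x => 2 / ε ^ 2 * K ℓ * (H x / x ^ 3 * (x / K x)))
      (𝓝[>] (0:ℝ)) (𝓝 (2 / ε ^ 2 * K ℓ * (1 / (6 * K ℓ) * 1))) :=
    tendsto_const_nhds.mul (tH.mul tx)
  have hval : 2 / ε ^ 2 * K ℓ * (1 / (6 * K ℓ) * 1) = 1 / (3 * ε ^ 2) := by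
    field_simp
    ring
  rw [hval] at tmain
  refine Tendsto.congr' ?_ tmain
  filter_upwards [Ioo_mem_nhdsGT_of_mem ⟨le_refl (0:ℝ), hℓ⟩] with x hx
  have hx0 : x ≠ 0 := ne_of_gt hx.1
  have hKx : K x ≠ 0 := (hKpos x ⟨hx.1, hx.2.le⟩).ne'
  rw [key x hx]
  field_simp
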